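/- Zero reflection coefficient extension: let M^N(l), l = −N+1,…,N−1, be the symbol of an N×N Hermitian positive definite Toeplitz matrix, and suppose the normalized forward predictor p'^N of order N (solution of M^N p = e_0, normalized so p_0 = 1) satisfies Σ_{l} M(l+1−k) p'_k = 0 appropriately so that the reflection coefficient σ_N = 0. Then there exists M(N) ∈ ℂ (and M(−N) := conj(M(N))) such that the extended (N+1)×(N+1) Toeplitz matrix with entries M(k−l), |k−l| ≤ N, is Hermitian positive definite. -/

import Mathlib

open scoped ComplexOrder
open Matrix

theorem stmt10 (N : ℕ) (hN : 0 < N) (M : ℤ → ℂ)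
    (hherm : ∀ l : ℤ, M (-l) = star (M l))
    (hpos : (Matrix.of fun k l : Fin N => M ((k : ℤ) - (l : ℤ))).PosDef)
    (p : Fin N → ℂ) (ρ : ℝ) (hρ : 0 < ρ)
    (hp : (Matrix.of fun k l : Fin N => M ((k : ℤ) - (l : ℤ))).mulVec p =
      (ρ : ℂ) • (Pi.single ⟨0, hN⟩ 1 : Fin N → ℂ))
    (hp0 : p ⟨0, hN⟩ = 1) :
    ∃ MN : ℂ,
      (∑ k : Fin N,
          (fun l : ℤ => if l = N then MN else if l = -N then star MN else M l)
            ((N : ℤ) - (k : ℤ)) * p k) = 0 ∧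
      (Matrix.of fun k l : Fin (N + 1) =>
          (fun l : ℤ => if l = N then MN else if l = -N then star MN else M l)
            ((k : ℤ) - (l : ℤ))).PosDef := by
  classical
  set z0 : Fin N := ⟨0, hN⟩ with hz0
  set MN : ℂ := -∑ k ∈ Finset.univ.erase z0, M ((N : ℤ) - (k : ℤ)) * p k with hMNdef
  set M' : ℤ → ℂ := fun l => if l = N then MN else if l = -N then star MN else M l
    with hM'def
  -- small values of the symbol are unchanged
  have hM'small : ∀ l : ℤ, l.natAbs < N → M' l = M l := by
    intro l hl
    have h1 : l ≠ (N : ℤ) := by omega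
    have h2 : l ≠ -(N : ℤ) := by omega
    simp [hM'def, h1, h2]
  -- the first claim
  have hNsum : ∑ k : Fin N, M' ((N : ℤ) - (k : ℤ)) * p k = 0 := by
    rw [← Finset.add_sum_erase _ _ (Finset.mem_univ z0)]
    have hcongr : ∀ k ∈ Finset.univ.erase z0,
        M' ((N : ℤ) - (k : ℤ)) * p k = M ((N : ℤ) - (k : ℤ)) * p k := by
      intro k hk
      have hk0 : k ≠ z0 := Finset.ne_of_mem_erase hk
      have hk0' : (k : ℕ) ≠ 0 := by
        intro h; exact hk0 (Fin.ext (by simpa [hz0] using h))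
      have hkN : (k : ℕ) < N := k.isLt
      apply congrArg (· * p k)
      apply hM'small
      omega
    rw [Finset.sum_congr rfl hcongr]
    have h0 : M' ((N : ℤ) - ((z0 : Fin N) : ℤ)) = MN := by simp [hM'def, hz0]
    rw [h0]
    simp only [hz0] at hp0 ⊢
    rw [hp0, mul_one, hMNdef]
    ring
  refine ⟨MN, hNsum, ?_⟩
  set T : Matrix (Fin N) (Fin N) ℂ := Matrix.of fun k l : Fin N => M ((k : ℤ) - (l : ℤ))
    with hTdef
  set T' : Matrix (Fin (N + 1)) (Fin (N + 1)) ℂ :=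
    Matrix.of fun k l : Fin (N + 1) => M' ((k : ℤ) - (l : ℤ)) with hT'def
  -- Hermitian symmetry of the extension
  have hM'herm : ∀ l : ℤ, M' (-l) = star (M' l) := by
    intro l
    rcases eq_or_ne l (N : ℤ) with h | h
    · subst h
      have h1 : -(N : ℤ) ≠ (N : ℤ) := by omega
      simp [hM'def, h1]
    · rcases eq_or_ne l (-(N : ℤ)) with h2 | h2
      · subst h2
        have h1 : -(-(N : ℤ)) = (N : ℤ) := by ring
        have h3 : -(N : ℤ) ≠ (N : ℤ) := by omega
        simp [hM'def, h1, h3]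
      · have h3 : -l ≠ (N : ℤ) := by omega
        have h4 : -l ≠ -(N : ℤ) := by omega
        simp only [hM'def, if_neg h, if_neg h2, if_neg h3, if_neg h4]
        exact hherm l
  have hT'herm : T'.IsHermitian := by
    ext k l
    simp only [hT'def, Matrix.conjTranspose_apply, Matrix.of_apply]
    rw [← hM'herm ((l : ℤ) - (k : ℤ)), neg_sub]
  -- the padded predictor
  set q : Fin (N + 1) → ℂ := fun j => if h : (j : ℕ) < N then p ⟨j, h⟩ else 0 with hqdef
  have hq0 : q 0 = 1 := by simp [hqdef, hN, hp0, hz0]; exact hp0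
  have hrow : T'.mulVec q = (ρ : ℂ) • (Pi.single 0 1 : Fin (N + 1) → ℂ) := by
    funext j
    have hsum : T'.mulVec q j = ∑ l : Fin N, M' ((j : ℤ) - (l : ℤ)) * p l := by
      simp only [Matrix.mulVec, dotProduct]
      rw [Fin.sum_univ_castSucc]
      have hlast : q (Fin.last N) = 0 := by simp [hqdef]
      rw [hlast, mul_zero, add_zero]
      apply Finset.sum_congr rfl
      intro l _
      have : q l.castSucc = p l := by simp [hqdef, l.isLt]
      rw [this]
      rfl
    by_cases hj : (j : ℕ) < N
    · have hj' : ∀ l : Fin N, M' ((j : ℤ) - (l : ℤ)) = M ((j : ℤ) - (l : ℤ)) := by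
        intro l
        apply hM'small
        have := l.isLt
        omega
      rw [hsum, Finset.sum_congr rfl fun l _ => by rw [hj' l]]
      have := congrFun hp ⟨j, hj⟩
      simp only [Matrix.mulVec, dotProduct, Matrix.of_apply] at this
      rw [show (∑ l : Fin N, M ((j : ℤ) - (l : ℤ)) * p l)
          = ∑ l : Fin N, (Matrix.of fun k l : Fin N => M ((k : ℤ) - (l : ℤ))) ⟨j, hj⟩ l * p l
          from rfl, this]
      simp only [Pi.smul_apply, Pi.single_apply, smul_eq_mul]
      have hiff : ((⟨j, hj⟩ : Fin N) = ⟨0, hN⟩) ↔ (j = (0 : Fin (N + 1))) := by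
        rw [Fin.ext_iff, Fin.ext_iff]
        simp
      by_cases h0 : j = (0 : Fin (N + 1))
      · rw [if_pos (hiff.mpr h0), if_pos h0]
      · rw [if_neg (fun hc => h0 (hiff.mp hc)), if_neg h0]
    · have hjN : (j : ℕ) = N := by have := j.isLt; omega
      have hj0 : j ≠ (0 : Fin (N + 1)) := by
        intro h; rw [h] at hjN; simp at hjN; omega
      rw [hsum]
      have : ∑ l : Fin N, M' ((j : ℤ) - (l : ℤ)) * p l
          = ∑ l : Fin N, M' ((N : ℤ) - (l : ℤ)) * p l := by
        apply Finset.sum_congr rfl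
        intro l _
        rw [show ((j : ℤ)) = (N : ℤ) by omega]
      rw [this, hNsum]
      simp [Pi.single_apply, hj0]
  -- positivity
  refine Matrix.posDef_iff_dotProduct_mulVec.mpr ⟨hT'herm, ?_⟩
  intro x hx
  set x0 : ℂ := x 0 with hx0def
  set w : Fin (N + 1) → ℂ := x - x0 • q with hwdef
  have hw0 : w 0 = 0 := by simp [hwdef, hq0, hx0def]
  have hxdec : x = w + x0 • q := by rw [hwdef]; ring_nf
  have hdot_wq : star w ⬝ᵥ T'.mulVec q = 0 := by
    rw [hrow, dotProduct_smul]
    rw [dotProduct_single]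
    simp [hw0]
  have hdot_qw : star q ⬝ᵥ T'.mulVec w = 0 := by
    rw [Matrix.dotProduct_mulVec]
    have hvm : Matrix.vecMul (star q) T' = star (T'.mulVec q) := by
      rw [Matrix.star_mulVec, hT'herm.eq]
    rw [hvm, hrow]
    simp [dotProduct, Pi.single_apply, apply_ite (star : ℂ → ℂ),
      Finset.sum_ite_eq', hw0]
  have hdot_qq : star q ⬝ᵥ T'.mulVec q = (ρ : ℂ) := by
    rw [hrow, dotProduct_smul, dotProduct_single]
    simp [hq0]
  have hkey : star x ⬝ᵥ T'.mulVec x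
      = star w ⬝ᵥ T'.mulVec w + star x0 * x0 * (ρ : ℂ) := by
    rw [hxdec]
    rw [Matrix.mulVec_add, Matrix.mulVec_smul]
    simp only [star_add, star_smul, add_dotProduct, dotProduct_add, smul_dotProduct,
      dotProduct_smul, smul_eq_mul, hdot_wq, hdot_qw, hdot_qq, mul_zero, add_zero, zero_add]
    ring
  set y : Fin N → ℂ := fun k => w k.succ with hydef
  have hww : star w ⬝ᵥ T'.mulVec w = star y ⬝ᵥ T.mulVec y := by
    simp only [Matrix.mulVec, dotProduct]
    rw [Fin.sum_univ_succ]
    simp only [Pi.star_apply, hw0, star_zero, zero_mul, zero_add]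
    apply Finset.sum_congr rfl
    intro k _
    congr 1
    rw [Fin.sum_univ_succ, hw0, mul_zero, zero_add]
    apply Finset.sum_congr rfl
    intro l _
    have hM : M' (((k.succ : Fin (N + 1)) : ℤ) - ((l.succ : Fin (N + 1)) : ℤ))
        = M ((k : ℤ) - (l : ℤ)) := by
      have h1 : ((k.succ : Fin (N + 1)) : ℤ) = (k : ℤ) + 1 := by simp [Fin.val_succ]
      have h2 : ((l.succ : Fin (N + 1)) : ℤ) = (l : ℤ) + 1 := by simp [Fin.val_succ]
      rw [h1, h2, show ((k : ℤ) + 1 - ((l : ℤ) + 1)) = (k : ℤ) - (l : ℤ) by ring]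
      apply hM'small
      have := k.isLt
      have := l.isLt
      omega
    show M' (((k.succ : Fin (N + 1)) : ℤ) - ((l.succ : Fin (N + 1)) : ℤ)) * w l.succ
        = M ((k : ℤ) - (l : ℤ)) * y l
    rw [hM, hydef]
  rw [hkey, hww]
  by_cases hx0 : x0 = 0
  · have hwx : w = x := by rw [hwdef, hx0]; simp
    have hy : y ≠ 0 := by
      intro hy0
      apply hx
      funext j
      rcases Fin.eq_zero_or_eq_succ j with h | ⟨k, hk⟩
      · rw [h, ← hx0def, hx0]; rfl
      · have : y k = 0 := by rw [hy0]; rfl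
        rw [hk]
        have := congrFun hwx k.succ
        rw [← this]
        exact ‹y k = 0›
    have h1 : 0 < star y ⬝ᵥ T.mulVec y := hpos.dotProduct_mulVec_pos hy
    rw [hx0]
    simpa using h1
  · have h1 : 0 ≤ star y ⬝ᵥ T.mulVec y := hpos.posSemidef.dotProduct_mulVec_nonneg y
    have h2 : (0 : ℂ) < star x0 * x0 * (ρ : ℂ) := by
      have : star x0 * x0 = ((Complex.normSq x0 : ℝ) : ℂ) := by
        rw [Complex.star_def, ← Complex.normSq_eq_conj_mul_self]
      rw [this, ← Complex.ofReal_mul]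
      rw [Complex.zero_lt_real]
      exact mul_pos (Complex.normSq_pos.mpr hx0) hρ
    exact add_pos_of_nonneg_of_pos h1 h2
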